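/- arXiv:2507.17556 — 7 statements merged into one kernel-verified Lean document; each statement's English description precedes it below -/
import Mathlib

section
/- Let x ∈ ℝⁿ and h ∈ [0,1], and let G ⊆ N = {1,…,d} be a nonempty subset with |G| ≥ ⌈(1−h)·d⌉. Then ‖∇f(x) − ∇f_G(x)‖ ≤ 2h · max_{i ∈ N} ‖∇f_i(x)‖. -/
open scoped RealInnerProductSpace

/-- The spectral (ℓ²-operator) norm of a real matrix. -/
noncomputable def specNorm {n : ℕ} (A : Matrix (Fin n) (Fin n) ℝ) : ℝ :=
  ‖Matrix.toEuclideanCLM (𝕜 := ℝ) A‖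

/-- The smallest eigenvalue of a (Hermitian) real matrix. -/
noncomputable def lambdaMin {n : ℕ} (A : Matrix (Fin n) (Fin n) ℝ) : ℝ :=
  if h : A.IsHermitian then ⨅ i, h.eigenvalues i else 0

/-- The Hessian matrix of `f` at `x`, given by second directional derivatives. -/
noncomputable def hessian {n : ℕ} (f : EuclideanSpace ℝ (Fin n) → ℝ)
    (x : EuclideanSpace ℝ (Fin n)) : Matrix (Fin n) (Fin n) ℝ :=
  fun i j => iteratedFDeriv ℝ 2 f x ![EuclideanSpace.single i 1, EuclideanSpace.single j 1]


lemma grad_aux {n d : ℕ} (f : Fin d → EuclideanSpace ℝ (Fin n) → ℝ)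
    (hf : ∀ i, ContDiff ℝ 2 (f i)) (x : EuclideanSpace ℝ (Fin n)) (c : ℝ) (s : Finset (Fin d)) :
    gradient (fun y => c * ∑ i ∈ s, f i y) x = c • ∑ i ∈ s, gradient (f i) x := by
  have hdiff : ∀ i, DifferentiableAt ℝ (f i) x := fun i =>
    ((hf i).differentiable two_ne_zero).differentiableAt
  rw [gradient]
  have : fderiv ℝ (fun y => c * ∑ i ∈ s, f i y) x = c • ∑ i ∈ s, fderiv ℝ (f i) x := by
    rw [fderiv_const_mul (by exact DifferentiableAt.fun_sum fun i _ => hdiff i)]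
    congr 1
    exact fderiv_fun_sum fun i _ => hdiff i
  rw [this, map_smul, map_sum]
  rfl


theorem stmt_0 {n d : ℕ} (hn : 1 ≤ n) [NeZero d]
    (f : Fin d → EuclideanSpace ℝ (Fin n) → ℝ)
    (hf : ∀ i, ContDiff ℝ 2 (f i))
    (x : EuclideanSpace ℝ (Fin n)) (h : ℝ) (hh0 : 0 ≤ h) (hh1 : h ≤ 1)
    (G : Finset (Fin d)) (hG : G.Nonempty)
    (hcard : ⌈(1 - h) * (d : ℝ)⌉₊ ≤ G.card) :
    ‖gradient (fun y => (d : ℝ)⁻¹ * ∑ i, f i y) x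
        - gradient (fun y => ((G.card : ℝ))⁻¹ * ∑ i ∈ G, f i y) x‖
      ≤ 2 * h * (Finset.univ.sup' Finset.univ_nonempty fun i => ‖gradient (f i) x‖) := by
  set g : Fin d → EuclideanSpace ℝ (Fin n) := fun i => gradient (f i) x with hg
  set M : ℝ := Finset.univ.sup' Finset.univ_nonempty fun i => ‖g i‖ with hM
  have hMle : ∀ i, ‖g i‖ ≤ M := fun i =>
    Finset.le_sup' (fun i => ‖g i‖) (Finset.mem_univ i)
  have hM0 : 0 ≤ M := le_trans (norm_nonneg (g ⟨0, Nat.pos_of_ne_zero (NeZero.ne d)⟩))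
    (hMle _)
  have hd0 : (0:ℝ) < d := Nat.cast_pos.mpr (Nat.pos_of_ne_zero (NeZero.ne d))
  have hk0 : (0:ℝ) < G.card := Nat.cast_pos.mpr hG.card_pos
  have hkd : (G.card : ℝ) ≤ d := Nat.cast_le.mpr (le_trans (Finset.card_le_univ G)
    (by simp))
  rw [grad_aux f hf x _ Finset.univ, grad_aux f hf x _ G]
  -- split sum over univ into G and Gᶜ
  have hsplit : ∑ i, g i = ∑ i ∈ G, g i + ∑ i ∈ Gᶜ, g i := by
    rw [← Finset.sum_add_sum_compl G]
  rw [hsplit]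
  have key : (d:ℝ)⁻¹ • (∑ i ∈ G, g i + ∑ i ∈ Gᶜ, g i) - (G.card:ℝ)⁻¹ • ∑ i ∈ G, g i
      = ((d:ℝ)⁻¹ - (G.card:ℝ)⁻¹) • ∑ i ∈ G, g i + (d:ℝ)⁻¹ • ∑ i ∈ Gᶜ, g i := by
    module
  rw [key]
  have hbound : ∀ (s : Finset (Fin d)), ‖∑ i ∈ s, g i‖ ≤ s.card * M := fun s => by
    calc ‖∑ i ∈ s, g i‖ ≤ ∑ i ∈ s, ‖g i‖ := norm_sum_le _ _
    _ ≤ ∑ _i ∈ s, M := Finset.sum_le_sum fun i _ => hMle i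
    _ = s.card * M := by rw [Finset.sum_const, nsmul_eq_mul]
  have hGd : (1 - h) * d ≤ G.card := le_trans (Nat.le_ceil _) (Nat.cast_le.mpr hcard)
  have hcompl : (Gᶜ.card : ℝ) = d - G.card := by
    rw [Finset.card_compl]
    push_cast [Nat.cast_sub (Finset.card_le_univ G)]
    simp
  calc ‖((d:ℝ)⁻¹ - (G.card:ℝ)⁻¹) • ∑ i ∈ G, g i + (d:ℝ)⁻¹ • ∑ i ∈ Gᶜ, g i‖
      ≤ ‖((d:ℝ)⁻¹ - (G.card:ℝ)⁻¹) • ∑ i ∈ G, g i‖ + ‖(d:ℝ)⁻¹ • ∑ i ∈ Gᶜ, g i‖ :=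
        norm_add_le _ _
    _ = |(d:ℝ)⁻¹ - (G.card:ℝ)⁻¹| * ‖∑ i ∈ G, g i‖ + |(d:ℝ)⁻¹| * ‖∑ i ∈ Gᶜ, g i‖ := by
        rw [norm_smul, norm_smul, Real.norm_eq_abs, Real.norm_eq_abs]
    _ ≤ ((G.card:ℝ)⁻¹ - (d:ℝ)⁻¹) * (G.card * M) + (d:ℝ)⁻¹ * (Gᶜ.card * M) := by
        have h1 : |(d:ℝ)⁻¹ - (G.card:ℝ)⁻¹| = (G.card:ℝ)⁻¹ - (d:ℝ)⁻¹ := by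
          rw [abs_sub_comm, abs_of_nonneg (sub_nonneg.mpr (inv_anti₀ hk0 hkd))]
        rw [h1, abs_of_nonneg (by positivity : (0:ℝ) ≤ (d:ℝ)⁻¹)]
        gcongr
        · exact sub_nonneg.mpr (inv_anti₀ hk0 hkd)
        · exact hbound G
        · exact hbound Gᶜ
    _ = (2 - 2 * ((G.card:ℝ) / d)) * M := by
        rw [hcompl]; field_simp; ring
    _ ≤ 2 * h * M := by
        have hfrac : 1 - h ≤ (G.card:ℝ)/d := by
          rw [le_div_iff₀ hd0]; exact hGd
        nlinarith [hM0, hfrac]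
end

section
/- Let x ∈ ℝⁿ and h ∈ [0,1], and let H ⊆ N = {1,…,d} be a nonempty subset with |H| ≥ ⌈(1−h)·d⌉. Then ‖∇²f(x) − ∇²f_H(x)‖ ≤ 2h · max_{i ∈ N} ‖∇²f_i(x)‖, where ‖·‖ is the spectral norm on symmetric matrices. -/
set_option maxHeartbeats 1000000
set_option synthInstance.maxHeartbeats 1000000

open scoped RealInnerProductSpace

lemma specNorm_nonneg {n : ℕ} (A : Matrix (Fin n) (Fin n) ℝ) : 0 ≤ specNorm A :=
  norm_nonneg _

lemma specNorm_smul {n : ℕ} (A : Matrix (Fin n) (Fin n) ℝ) (c : ℝ) :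
    specNorm (c • A) = |c| * specNorm A := by
  rw [specNorm, map_smul]
  rw [norm_smul c (Matrix.toEuclideanCLM (𝕜 := ℝ) A), Real.norm_eq_abs, specNorm]

lemma specNorm_sum_le {n : ℕ} {ι : Type*} (s : Finset ι) (A : ι → Matrix (Fin n) (Fin n) ℝ) :
    specNorm (∑ i ∈ s, A i) ≤ ∑ i ∈ s, specNorm (A i) := by
  simp only [specNorm, map_sum]
  exact norm_sum_le _ _

lemma specNorm_add_le {n : ℕ} (A B : Matrix (Fin n) (Fin n) ℝ) :
    specNorm (A + B) ≤ specNorm A + specNorm B := by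
  simp only [specNorm, map_add]
  exact norm_add_le _ _

lemma hessian_const_mul_sum {n d : ℕ} (f : Fin d → EuclideanSpace ℝ (Fin n) → ℝ)
    (hf : ∀ i, ContDiff ℝ 2 (f i)) (x : EuclideanSpace ℝ (Fin n))
    (s : Finset (Fin d)) (c : ℝ) :
    hessian (fun y => c * ∑ i ∈ s, f i y) x = c • ∑ i ∈ s, hessian (f i) x := by
  funext i j
  have h1 : (fun y => c * ∑ i ∈ s, f i y) = fun y => c • (∑ i ∈ s, f i ·) y := by
    funext y; simp [smul_eq_mul]
  have h2 : iteratedFDeriv ℝ 2 (fun y => c • (∑ i ∈ s, f i ·) y) x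
      = c • iteratedFDeriv ℝ 2 (∑ i ∈ s, f i ·) x :=
    iteratedFDeriv_const_smul_apply' (ContDiff.sum fun j _ => hf j).contDiffAt
  have h3 : iteratedFDeriv ℝ 2 (∑ i ∈ s, f i ·) x
      = ∑ i ∈ s, iteratedFDeriv ℝ 2 (f i) x := by
    rw [iteratedFDeriv_sum fun j _ => (hf j)]
    simp
  show iteratedFDeriv ℝ 2 (fun y => c * ∑ i ∈ s, f i y) x _ = _
  rw [h1, h2, h3]
  simp only [ContinuousMultilinearMap.smul_apply, ContinuousMultilinearMap.sum_apply,
    Matrix.smul_apply, Matrix.sum_apply, hessian, smul_eq_mul]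

theorem stmt_1 {n d : ℕ} (hn : 1 ≤ n) [NeZero d]
    (f : Fin d → EuclideanSpace ℝ (Fin n) → ℝ)
    (hf : ∀ i, ContDiff ℝ 2 (f i))
    (x : EuclideanSpace ℝ (Fin n)) (h : ℝ) (hh0 : 0 ≤ h) (hh1 : h ≤ 1)
    (H : Finset (Fin d)) (hH : H.Nonempty)
    (hcard : ⌈(1 - h) * (d : ℝ)⌉₊ ≤ H.card) :
    specNorm (hessian (fun y => (d : ℝ)⁻¹ * ∑ i, f i y) x
        - hessian (fun y => ((H.card : ℝ))⁻¹ * ∑ i ∈ H, f i y) x)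
      ≤ 2 * h * (Finset.univ.sup' Finset.univ_nonempty fun i => specNorm (hessian (f i) x)) := by
  set A : Fin d → Matrix (Fin n) (Fin n) ℝ := fun i => hessian (f i) x with hA
  set M : ℝ := Finset.univ.sup' Finset.univ_nonempty fun i => specNorm (A i) with hM
  have hMle : ∀ i, specNorm (A i) ≤ M := fun i =>
    Finset.le_sup' (fun i => specNorm (A i)) (Finset.mem_univ i)
  have hM0 : 0 ≤ M := le_trans (specNorm_nonneg _) (hMle hH.choose)
  set k : ℕ := H.card with hk
  have hk1 : 1 ≤ k := Finset.card_pos.mpr hH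
  have hkd : k ≤ d := by simpa using Finset.card_le_card (Finset.subset_univ H)
  have hd0 : (0:ℝ) < d := by exact_mod_cast Nat.pos_of_ne_zero (NeZero.ne d)
  have hk0 : (0:ℝ) < k := by exact_mod_cast hk1
  -- key cardinality bound: d - k ≤ h * d
  have hdk : (d:ℝ) - k ≤ h * d := by
    have : (1 - h) * d ≤ (k:ℝ) :=
      le_trans (Nat.le_ceil _) (by exact_mod_cast hcard)
    nlinarith
  -- rewrite the hessians
  have e1 : hessian (fun y => (d : ℝ)⁻¹ * ∑ i, f i y) x = (d:ℝ)⁻¹ • ∑ i, A i :=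
    hessian_const_mul_sum f hf x Finset.univ _
  have e2 : hessian (fun y => ((H.card : ℝ))⁻¹ * ∑ i ∈ H, f i y) x
      = ((k:ℝ))⁻¹ • ∑ i ∈ H, A i :=
    hessian_const_mul_sum f hf x H _
  rw [e1, e2]
  -- decompose
  have decomp : (d:ℝ)⁻¹ • ∑ i, A i - ((k:ℝ))⁻¹ • ∑ i ∈ H, A i
      = ((d:ℝ)⁻¹ - (k:ℝ)⁻¹) • ∑ i ∈ H, A i + (d:ℝ)⁻¹ • ∑ i ∈ Finset.univ \ H, A i := by
    rw [← Finset.sum_sdiff (Finset.subset_univ H)]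
    rw [smul_add, sub_smul]
    abel
  rw [decomp]
  have bsum : ∀ (s : Finset (Fin d)), specNorm (∑ i ∈ s, A i) ≤ s.card * M := by
    intro s
    calc specNorm (∑ i ∈ s, A i) ≤ ∑ i ∈ s, specNorm (A i) := specNorm_sum_le s A
      _ ≤ ∑ _i ∈ s, M := Finset.sum_le_sum fun i _ => hMle i
      _ = s.card * M := by simp [mul_comm]
  have b1 : specNorm ((((d:ℝ))⁻¹ - (k:ℝ)⁻¹) • ∑ i ∈ H, A i) ≤ ((d:ℝ) - k) / d * M := by
    rw [specNorm_smul]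
    have hinv : (d:ℝ)⁻¹ ≤ (k:ℝ)⁻¹ := by
      rw [inv_le_inv₀ hd0 hk0]
      exact_mod_cast hkd
    have habs : |(d:ℝ)⁻¹ - (k:ℝ)⁻¹| = (k:ℝ)⁻¹ - (d:ℝ)⁻¹ := by
      rw [abs_sub_comm, abs_of_nonneg (by linarith)]
    rw [habs]
    calc ((k:ℝ)⁻¹ - (d:ℝ)⁻¹) * specNorm (∑ i ∈ H, A i)
        ≤ ((k:ℝ)⁻¹ - (d:ℝ)⁻¹) * (k * M) := by
          exact mul_le_mul_of_nonneg_left (bsum H) (by linarith)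
      _ = ((d:ℝ) - k) / d * M := by field_simp
  have b2 : specNorm ((d:ℝ)⁻¹ • ∑ i ∈ Finset.univ \ H, A i) ≤ ((d:ℝ) - k) / d * M := by
    rw [specNorm_smul]
    have hcard2 : ((Finset.univ \ H).card : ℝ) = (d:ℝ) - k := by
      rw [Finset.card_sdiff_of_subset (Finset.subset_univ H)]
      have : H.card ≤ (Finset.univ : Finset (Fin d)).card := Finset.card_le_card (Finset.subset_univ H)
      push_cast [Nat.cast_sub this]
      simp [hk]
    calc |(d:ℝ)⁻¹| * specNorm (∑ i ∈ Finset.univ \ H, A i)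
        ≤ (d:ℝ)⁻¹ * (((Finset.univ \ H).card : ℝ) * M) := by
          rw [abs_of_nonneg (by positivity)]
          exact mul_le_mul_of_nonneg_left (bsum _) (by positivity)
      _ = ((d:ℝ) - k) / d * M := by rw [hcard2]; field_simp
  calc specNorm _ ≤ _ := specNorm_add_le _ _
    _ ≤ ((d:ℝ) - k) / d * M + ((d:ℝ) - k) / d * M := add_le_add b1 b2
    _ = 2 * (((d:ℝ) - k) / d) * M := by ring
    _ ≤ 2 * h * M := by
        apply mul_le_mul_of_nonneg_right ?_ hM0
        have : ((d:ℝ) - k) / d ≤ h := by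
          rw [div_le_iff₀ hd0]; linarith
        linarith
end

section
/- Let L_g > 0 and suppose each gradient ∇f_i is L_g-Lipschitz continuous on ℝⁿ and that for each i ∈ N there exists x_i* ∈ ℝⁿ with ∇f_i(x_i*) = 0. Let x ∈ ℝⁿ and D_0 ≥ 0 satisfy max_{i ∈ N} ‖x − x_i*‖ ≤ D_0. Then for every h ∈ [0,1] and every nonempty G ⊆ N with |G| ≥ ⌈(1−h)·d⌉, one has ‖∇f(x) − ∇f_G(x)‖ ≤ 2 h L_g D_0. -/
open scoped RealInnerProductSpace

theorem stmt_2 {n d : ℕ} (hn : 1 ≤ n) [NeZero d]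
    (f : Fin d → EuclideanSpace ℝ (Fin n) → ℝ)
    (hf : ∀ i, ContDiff ℝ 2 (f i))
    (Lg : ℝ) (hLg : 0 < Lg)
    (hlip : ∀ i, ∀ y z : EuclideanSpace ℝ (Fin n),
      ‖gradient (f i) y - gradient (f i) z‖ ≤ Lg * ‖y - z‖)
    (xstar : Fin d → EuclideanSpace ℝ (Fin n))
    (hstar : ∀ i, gradient (f i) (xstar i) = 0)
    (x : EuclideanSpace ℝ (Fin n)) (D0 : ℝ) (hD0 : 0 ≤ D0)
    (hDx : ∀ i, ‖x - xstar i‖ ≤ D0)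
    (h : ℝ) (hh0 : 0 ≤ h) (hh1 : h ≤ 1)
    (G : Finset (Fin d)) (hG : G.Nonempty)
    (hcard : ⌈(1 - h) * (d : ℝ)⌉₊ ≤ G.card) :
    ‖gradient (fun y => (d : ℝ)⁻¹ * ∑ i, f i y) x
        - gradient (fun y => ((G.card : ℝ))⁻¹ * ∑ i ∈ G, f i y) x‖
      ≤ 2 * h * Lg * D0 := by
  set g : Fin d → EuclideanSpace ℝ (Fin n) := fun i => gradient (f i) x with hg
  have hdiff : ∀ i, DifferentiableAt ℝ (f i) x :=
    fun i => ((hf i).differentiable (by norm_num)).differentiableAt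
  have key : ∀ (S : Finset (Fin d)) (c : ℝ),
      gradient (fun y => c * ∑ i ∈ S, f i y) x = c • ∑ i ∈ S, g i := by
    intro S c
    have h1 : HasFDerivAt (fun y => c * ∑ i ∈ S, f i y)
        (c • ∑ i ∈ S, (InnerProductSpace.toDual ℝ _) (g i)) x := by
      exact HasFDerivAt.const_mul
        (HasFDerivAt.fun_sum (fun i _ => (hdiff i).hasGradientAt.hasFDerivAt)) c
    have h2 := (hasFDerivAt_iff_hasGradientAt.mp h1).gradient
    rw [h2, map_smul, map_sum]
    simp
  have hgi : ∀ i, ‖g i‖ ≤ Lg * D0 := by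
    intro i
    have := hlip i x (xstar i)
    rw [hstar i, sub_zero] at this
    exact this.trans (by nlinarith [hDx i])
  have hdpos : (0:ℝ) < d := by exact_mod_cast Nat.pos_of_ne_zero (NeZero.ne d)
  have hspos : (0:ℝ) < G.card := by exact_mod_cast hG.card_pos
  have hsled : (G.card : ℝ) ≤ d := by exact_mod_cast (G.card_le_univ).trans_eq (by simp)
  have hlb : (1 - h) * d ≤ G.card := (Nat.le_ceil _).trans (by exact_mod_cast hcard)
  rw [key Finset.univ, key G]
  have hsplit : (∑ i, g i) = ∑ i ∈ G, g i + ∑ i ∈ Gᶜ, g i := by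
    rw [← Finset.sum_add_sum_compl G]
  rw [hsplit, smul_add]
  have heq : (d:ℝ)⁻¹ • ∑ i ∈ G, g i + (d:ℝ)⁻¹ • ∑ i ∈ Gᶜ, g i
      - (G.card : ℝ)⁻¹ • ∑ i ∈ G, g i
      = ((d:ℝ)⁻¹ - (G.card:ℝ)⁻¹) • ∑ i ∈ G, g i + (d:ℝ)⁻¹ • ∑ i ∈ Gᶜ, g i := by
    rw [sub_smul]; abel
  rw [heq]
  have hB : ∀ (S : Finset (Fin d)), ‖∑ i ∈ S, g i‖ ≤ S.card * (Lg * D0) := by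
    intro S
    calc ‖∑ i ∈ S, g i‖ ≤ ∑ i ∈ S, ‖g i‖ := norm_sum_le _ _
    _ ≤ ∑ i ∈ S, (Lg * D0) := Finset.sum_le_sum (fun i _ => hgi i)
    _ = S.card * (Lg * D0) := by rw [Finset.sum_const, nsmul_eq_mul]
  have hcardc : (Gᶜ.card : ℝ) = d - G.card := by
    rw [Finset.card_compl]
    push_cast [Nat.cast_sub (G.card_le_univ)]
    simp
  calc ‖((d:ℝ)⁻¹ - (G.card:ℝ)⁻¹) • ∑ i ∈ G, g i + (d:ℝ)⁻¹ • ∑ i ∈ Gᶜ, g i‖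
      ≤ ‖((d:ℝ)⁻¹ - (G.card:ℝ)⁻¹) • ∑ i ∈ G, g i‖ + ‖(d:ℝ)⁻¹ • ∑ i ∈ Gᶜ, g i‖ :=
        norm_add_le _ _
    _ = |(d:ℝ)⁻¹ - (G.card:ℝ)⁻¹| * ‖∑ i ∈ G, g i‖ + (d:ℝ)⁻¹ * ‖∑ i ∈ Gᶜ, g i‖ := by
        rw [norm_smul, norm_smul, Real.norm_eq_abs, Real.norm_eq_abs,
          abs_of_pos (inv_pos.mpr hdpos)]
    _ ≤ ((G.card:ℝ)⁻¹ - (d:ℝ)⁻¹) * (G.card * (Lg * D0))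
        + (d:ℝ)⁻¹ * ((Gᶜ.card) * (Lg * D0)) := by
        have habs : |(d:ℝ)⁻¹ - (G.card:ℝ)⁻¹| = (G.card:ℝ)⁻¹ - (d:ℝ)⁻¹ := by
          rw [abs_sub_comm, abs_of_nonneg]
          have := one_div_le_one_div_of_le hspos hsled
          simp only [one_div] at this
          linarith
        rw [habs]
        have h1 : (0:ℝ) ≤ (G.card:ℝ)⁻¹ - (d:ℝ)⁻¹ := by
          have := one_div_le_one_div_of_le hspos hsled
          simp only [one_div] at this; linarith
        gcongr <;> [exact hB G; exact hB Gᶜ]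
    _ ≤ 2 * h * Lg * D0 := by
        rw [hcardc]
        have hLD : 0 ≤ Lg * D0 := by positivity
        have h2 : (d:ℝ) - G.card ≤ h * d := by nlinarith
        have e1 : ((G.card:ℝ)⁻¹ - (d:ℝ)⁻¹) * (G.card * (Lg * D0))
            = (1 - G.card / d) * (Lg * D0) := by
          field_simp
        have e2 : (d:ℝ)⁻¹ * (((d:ℝ) - G.card) * (Lg * D0))
            = (1 - G.card / d) * (Lg * D0) := by
          field_simp
        rw [e1, e2]
        have h3 : 1 - (G.card:ℝ)/d ≤ h := by
          have h4 : 1 - h ≤ (G.card:ℝ)/d := (le_div_iff₀ hdpos).mpr (by linarith)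
          linarith
        nlinarith
end

section
/- Let L_g > 0 and suppose each gradient ∇f_i is L_g-Lipschitz continuous on ℝⁿ and that for each i ∈ N there exists x_i* ∈ ℝⁿ with ∇f_i(x_i*) = 0. Let x ∈ ℝⁿ and D_0 ≥ 0 satisfy max_{i ∈ N} ‖x − x_i*‖ ≤ D_0. Let ε_g > 0 and h ∈ [0,1] satisfy ‖∇f(x)‖ > ε_g and 10 L_g D_0 h < ε_g. Then for every nonempty G ⊆ N with |G| ≥ ⌈(1−h)·d⌉, one has ‖∇f_G(x)‖ > 4ε_g/5. -/
open scoped RealInnerProductSpace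

lemma grad_smul_sum {n : ℕ} {ι : Type*} (s : Finset ι)
    (f : ι → EuclideanSpace ℝ (Fin n) → ℝ) (x : EuclideanSpace ℝ (Fin n))
    (hf : ∀ i, DifferentiableAt ℝ (f i) x) (c : ℝ) :
    HasGradientAt (fun y => c * ∑ i ∈ s, f i y)
      (c • ∑ i ∈ s, gradient (f i) x) x := by
  rw [hasGradientAt_iff_hasFDerivAt]
  have hd : (InnerProductSpace.toDual ℝ (EuclideanSpace ℝ (Fin n)))
      (c • ∑ i ∈ s, gradient (f i) x)
      = c • ∑ i ∈ s, (InnerProductSpace.toDual ℝ (EuclideanSpace ℝ (Fin n)))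
        (gradient (f i) x) := by
    simp
  rw [hd]
  exact HasFDerivAt.const_mul
    (HasFDerivAt.fun_sum fun i _ => (hf i).hasGradientAt.hasFDerivAt) c

set_option maxHeartbeats 1000000 in
theorem stmt_4 {n d : ℕ} (hn : 1 ≤ n) [NeZero d]
    (f : Fin d → EuclideanSpace ℝ (Fin n) → ℝ)
    (hf : ∀ i, ContDiff ℝ 2 (f i))
    (Lg : ℝ) (hLg : 0 < Lg)
    (hlip : ∀ i, ∀ y z : EuclideanSpace ℝ (Fin n),
      ‖gradient (f i) y - gradient (f i) z‖ ≤ Lg * ‖y - z‖)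
    (xstar : Fin d → EuclideanSpace ℝ (Fin n))
    (hstar : ∀ i, gradient (f i) (xstar i) = 0)
    (x : EuclideanSpace ℝ (Fin n)) (D0 : ℝ) (hD0 : 0 ≤ D0)
    (hDx : ∀ i, ‖x - xstar i‖ ≤ D0)
    (εg h : ℝ) (hεg : 0 < εg) (hh0 : 0 ≤ h) (hh1 : h ≤ 1)
    (hgrad : εg < ‖gradient (fun y => (d : ℝ)⁻¹ * ∑ i, f i y) x‖)
    (hsmall : 10 * Lg * D0 * h < εg)
    (G : Finset (Fin d)) (hG : G.Nonempty)
    (hcard : ⌈(1 - h) * (d : ℝ)⌉₊ ≤ G.card) :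
    4 * εg / 5 < ‖gradient (fun y => ((G.card : ℝ))⁻¹ * ∑ i ∈ G, f i y) x‖ := by
  classical
  have hdiff : ∀ i, DifferentiableAt ℝ (f i) x := fun i =>
    ((hf i).differentiable (by norm_num)).differentiableAt
  set g : Fin d → EuclideanSpace ℝ (Fin n) := fun i => gradient (f i) x with hg_def
  -- bound on each gradient
  have hgb : ∀ i, ‖g i‖ ≤ Lg * D0 := by
    intro i
    have := hlip i x (xstar i)
    rw [hstar i, sub_zero] at this
    exact this.trans (by nlinarith [hDx i, norm_nonneg (x - xstar i)])
  -- compute the two gradients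
  have hfull := (grad_smul_sum Finset.univ f x hdiff ((d : ℝ)⁻¹)).gradient
  have hpart := (grad_smul_sum G f x hdiff ((G.card : ℝ)⁻¹)).gradient
  set S : EuclideanSpace ℝ (Fin n) := ∑ i, g i with hS
  set SG : EuclideanSpace ℝ (Fin n) := ∑ i ∈ G, g i with hSG
  have hdpos : 0 < (d : ℝ) := by exact_mod_cast Nat.pos_of_ne_zero (NeZero.ne d)
  have hkpos : 0 < (G.card : ℝ) := by exact_mod_cast Finset.card_pos.mpr hG
  rw [hfull, norm_smul, Real.norm_eq_abs, abs_of_nonneg (by positivity)] at hgrad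
  rw [hpart, norm_smul, Real.norm_eq_abs, abs_of_nonneg (by positivity)]
  -- A := ‖S‖ satisfies d * εg < A ≤ d * Lg * D0
  have hA : (d : ℝ) * εg < ‖S‖ := by
    rw [← lt_div_iff₀' hdpos]
    simpa [div_eq_inv_mul] using hgrad
  have hAle : ‖S‖ ≤ (d : ℝ) * (Lg * D0) := by
    calc ‖S‖ ≤ ∑ i, ‖g i‖ := norm_sum_le _ _
    _ ≤ ∑ _i : Fin d, Lg * D0 := Finset.sum_le_sum fun i _ => hgb i
    _ = (d : ℝ) * (Lg * D0) := by simp [mul_comm]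
  -- complement bound
  have hcompl : ‖S - SG‖ ≤ ((d - G.card : ℕ) : ℝ) * (Lg * D0) := by
    have : S - SG = ∑ i ∈ Gᶜ, g i := by
      rw [hS, hSG, ← Finset.sum_add_sum_compl G g]
      exact add_sub_cancel_left _ _
    rw [this]
    calc ‖∑ i ∈ Gᶜ, g i‖ ≤ ∑ i ∈ Gᶜ, ‖g i‖ := norm_sum_le _ _
    _ ≤ ∑ _i ∈ Gᶜ, Lg * D0 := Finset.sum_le_sum fun i _ => hgb i
    _ = ((d - G.card : ℕ) : ℝ) * (Lg * D0) := by
        rw [Finset.sum_const, Finset.card_compl, Fintype.card_fin, nsmul_eq_mul]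
  have hkd : G.card ≤ d := (Finset.card_le_univ G).trans_eq (by simp)
  -- (1-h)*d ≤ card G
  have hklb : (1 - h) * (d : ℝ) ≤ (G.card : ℝ) := by
    calc (1 - h) * (d : ℝ) ≤ (⌈(1 - h) * (d : ℝ)⌉₊ : ℝ) := Nat.le_ceil _
    _ ≤ (G.card : ℝ) := by exact_mod_cast hcard
  have hm : ((d - G.card : ℕ) : ℝ) ≤ h * d := by
    have : ((d - G.card : ℕ) : ℝ) = (d : ℝ) - G.card := by
      rw [Nat.cast_sub hkd]
    nlinarith
  -- m * Lg * D0 < d * εg / 5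
  have hLgD0 : εg < Lg * D0 := by nlinarith
  have hmain : ((d - G.card : ℕ) : ℝ) * (Lg * D0) < (d : ℝ) * εg / 5 := by
    have h1 : ((d - G.card : ℕ) : ℝ) * (Lg * D0) ≤ (d : ℝ) * (h * (Lg * D0)) := by
      calc ((d - G.card : ℕ) : ℝ) * (Lg * D0)
          ≤ h * d * (Lg * D0) := mul_le_mul_of_nonneg_right hm (mul_nonneg hLg.le hD0)
        _ = (d : ℝ) * (h * (Lg * D0)) := by ring
    have h2 : (d : ℝ) * (h * (Lg * D0)) < (d : ℝ) * εg / 10 := by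
      have h3 := mul_lt_mul_of_pos_left hsmall hdpos
      ring_nf at h3 ⊢
      linarith
    have h4 : 0 < (d : ℝ) * εg := mul_pos hdpos hεg
    linarith
  -- finish
  have hSGlb : ‖S‖ - ((d - G.card : ℕ) : ℝ) * (Lg * D0) ≤ ‖SG‖ := by
    have := norm_sub_norm_le S SG
    linarith [hcompl]
  have hkd' : (G.card : ℝ) ≤ (d : ℝ) := by exact_mod_cast hkd
  have hfinal : 4 * εg / 5 * (G.card : ℝ) < ‖SG‖ := by
    have e1 : 4 * εg / 5 * (G.card : ℝ) ≤ 4 * εg / 5 * (d : ℝ) :=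
      mul_le_mul_of_nonneg_left hkd' (by positivity)
    have e2 : 4 * εg / 5 * (d : ℝ) < ‖S‖ - ((d - G.card : ℕ) : ℝ) * (Lg * D0) := by
      linarith
    linarith
  rw [inv_mul_eq_div, lt_div_iff₀ hkpos]
  exact hfinal
end

section
/- Let L_g > 0, x ∈ ℝⁿ, and suppose ‖∇²f_i(x)‖ ≤ L_g for every i ∈ N, where ‖·‖ is the spectral norm. Let ε_H > 0 and h ∈ [0,1] satisfy −λ_min(∇²f(x)) > ε_H and 10 L_g h < ε_H. Then for every nonempty H ⊆ N with |H| ≥ ⌈(1−h)·d⌉, one has −λ_min(∇²f_H(x)) > 4ε_H/5. -/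
open scoped RealInnerProductSpace

lemma hessian_isHermitian {n : ℕ} {f : EuclideanSpace ℝ (Fin n) → ℝ}
    (hf : ContDiff ℝ 2 f) (x : EuclideanSpace ℝ (Fin n)) : (hessian f x).IsHermitian := by
  apply Matrix.IsHermitian.ext
  intro i j
  simp only [hessian, star_trivial]
  rw [iteratedFDeriv_two_apply, iteratedFDeriv_two_apply]
  simpa using (hf.contDiffAt.isSymmSndFDerivAt (by simp) (EuclideanSpace.single j 1)
    (EuclideanSpace.single i 1))

lemma toEuclideanCLM_eigen {n : ℕ} {A : Matrix (Fin n) (Fin n) ℝ} (hA : A.IsHermitian)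
    (j : Fin n) :
    Matrix.toEuclideanCLM (𝕜 := ℝ) A (hA.eigenvectorBasis j)
      = hA.eigenvalues j • hA.eigenvectorBasis j := by
  apply (WithLp.equiv 2 (Fin n → ℝ)).injective
  simp only [WithLp.equiv_apply, Matrix.ofLp_toEuclideanCLM]
  simpa using hA.mulVec_eigenvectorBasis j

lemma inner_eigen {n : ℕ} {A : Matrix (Fin n) (Fin n) ℝ} (hA : A.IsHermitian) (j : Fin n) :
    ⟪hA.eigenvectorBasis j, Matrix.toEuclideanCLM (𝕜 := ℝ) A (hA.eigenvectorBasis j)⟫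
      = hA.eigenvalues j := by
  rw [toEuclideanCLM_eigen hA j, real_inner_smul_right, real_inner_self_eq_norm_sq,
    hA.eigenvectorBasis.orthonormal.1 j]
  simp

lemma inner_toEuclideanCLM_eq {n : ℕ} {A : Matrix (Fin n) (Fin n) ℝ} (hA : A.IsHermitian)
    (v : EuclideanSpace ℝ (Fin n)) :
    ⟪v, Matrix.toEuclideanCLM (𝕜 := ℝ) A v⟫
      = ∑ j, hA.eigenvalues j * ⟪hA.eigenvectorBasis j, v⟫ ^ 2 := by
  set B := hA.eigenvectorBasis with hB
  have hexp : Matrix.toEuclideanCLM (𝕜 := ℝ) A v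
      = ∑ j, (⟪B j, v⟫ * hA.eigenvalues j) • B j := by
    conv_lhs => rw [← B.sum_repr' v]
    rw [map_sum]
    refine Finset.sum_congr rfl fun j _ => ?_
    rw [map_smul, toEuclideanCLM_eigen hA j, smul_smul]
  rw [hexp, inner_sum]
  refine Finset.sum_congr rfl fun j _ => ?_
  rw [real_inner_smul_right, real_inner_comm v]
  ring

lemma lambdaMin_le_inner {n : ℕ} [NeZero n] {A : Matrix (Fin n) (Fin n) ℝ}
    (hA : A.IsHermitian) (v : EuclideanSpace ℝ (Fin n)) (hv : ‖v‖ = 1) :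
    lambdaMin A ≤ ⟪v, Matrix.toEuclideanCLM (𝕜 := ℝ) A v⟫ := by
  rw [inner_toEuclideanCLM_eq hA v]
  have hsum : ∑ j, ⟪hA.eigenvectorBasis j, v⟫ ^ 2 = 1 := by
    have := hA.eigenvectorBasis.sum_inner_mul_inner v v
    calc ∑ j, ⟪hA.eigenvectorBasis j, v⟫ ^ 2
        = ∑ j, ⟪v, hA.eigenvectorBasis j⟫ * ⟪hA.eigenvectorBasis j, v⟫ := by
          refine Finset.sum_congr rfl fun j _ => ?_
          rw [real_inner_comm v]; ring
      _ = ⟪v, v⟫ := this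
      _ = 1 := by rw [real_inner_self_eq_norm_sq, hv]; norm_num
  have hmin : ∀ j, lambdaMin A ≤ hA.eigenvalues j := by
    intro j
    rw [lambdaMin, dif_pos hA]
    exact ciInf_le (Finite.bddBelow_range _) j
  calc lambdaMin A = ∑ j, lambdaMin A * ⟪hA.eigenvectorBasis j, v⟫ ^ 2 := by
        rw [← Finset.mul_sum, hsum, mul_one]
    _ ≤ ∑ j, hA.eigenvalues j * ⟪hA.eigenvectorBasis j, v⟫ ^ 2 :=
        Finset.sum_le_sum fun j _ => mul_le_mul_of_nonneg_right (hmin j) (sq_nonneg _)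

lemma exists_unit_inner_eq_lambdaMin {n : ℕ} [NeZero n] {A : Matrix (Fin n) (Fin n) ℝ}
    (hA : A.IsHermitian) :
    ∃ v : EuclideanSpace ℝ (Fin n), ‖v‖ = 1 ∧
      ⟪v, Matrix.toEuclideanCLM (𝕜 := ℝ) A v⟫ = lambdaMin A := by
  obtain ⟨j, -, hj⟩ := Finset.exists_min_image Finset.univ hA.eigenvalues ⟨_, Finset.mem_univ
    (Classical.arbitrary (Fin n))⟩
  refine ⟨hA.eigenvectorBasis j, hA.eigenvectorBasis.orthonormal.1 j, ?_⟩
  rw [inner_eigen hA j]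
  rw [lambdaMin, dif_pos hA]
  exact le_antisymm (le_ciInf fun i => hj i (Finset.mem_univ i))
    (ciInf_le (Finite.bddBelow_range _) j)

lemma hessian_combo {n d : ℕ} (f : Fin d → EuclideanSpace ℝ (Fin n) → ℝ)
    (hf : ∀ i, ContDiff ℝ 2 (f i)) (s : Finset (Fin d)) (c : ℝ)
    (x : EuclideanSpace ℝ (Fin n)) :
    hessian (fun y => c * ∑ i ∈ s, f i y) x = c • ∑ i ∈ s, hessian (f i) x := by
  funext i j
  show iteratedFDeriv ℝ 2 (fun y => c * ∑ i ∈ s, f i y) x _ = _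
  have h1 : (fun y => c * ∑ i ∈ s, f i y) = c • (∑ i ∈ s, f i ·) := rfl
  rw [h1, iteratedFDeriv_const_smul_apply (ContDiff.sum fun i _ => hf i).contDiffAt,
    iteratedFDeriv_sum (fun i _ => hf i)]
  simp [hessian, Matrix.smul_apply, Matrix.sum_apply]

theorem stmt_5 {n d : ℕ} (hn : 1 ≤ n) [NeZero d]
    (f : Fin d → EuclideanSpace ℝ (Fin n) → ℝ)
    (hf : ∀ i, ContDiff ℝ 2 (f i))
    (Lg : ℝ) (hLg : 0 < Lg)
    (x : EuclideanSpace ℝ (Fin n))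
    (hhess : ∀ i, specNorm (hessian (f i) x) ≤ Lg)
    (εH h : ℝ) (hεH : 0 < εH) (hh0 : 0 ≤ h) (hh1 : h ≤ 1)
    (hcurv : εH < -lambdaMin (hessian (fun y => (d : ℝ)⁻¹ * ∑ i, f i y) x))
    (hsmall : 10 * Lg * h < εH)
    (H : Finset (Fin d)) (hH : H.Nonempty)
    (hcard : ⌈(1 - h) * (d : ℝ)⌉₊ ≤ H.card) :
    4 * εH / 5 < -lambdaMin (hessian (fun y => ((H.card : ℝ))⁻¹ * ∑ i ∈ H, f i y) x) := by
  haveI : NeZero n := ⟨by omega⟩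
  have hermA : (hessian (fun y => (d : ℝ)⁻¹ * ∑ i, f i y) x).IsHermitian :=
    hessian_isHermitian (contDiff_const.mul (ContDiff.sum fun i _ => hf i)) x
  have hermH : (hessian (fun y => ((H.card : ℝ))⁻¹ * ∑ i ∈ H, f i y) x).IsHermitian :=
    hessian_isHermitian (contDiff_const.mul (ContDiff.sum fun i _ => hf i)) x
  obtain ⟨v, hv1, hveq⟩ := exists_unit_inner_eq_lambdaMin hermA
  set q : Fin d → ℝ := fun i => ⟪v, Matrix.toEuclideanCLM (𝕜 := ℝ) (hessian (f i) x) v⟫ with hq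
  have hqbound : ∀ i, |q i| ≤ Lg := by
    intro i
    calc |q i| ≤ ‖v‖ * ‖Matrix.toEuclideanCLM (𝕜 := ℝ) (hessian (f i) x) v‖ :=
          abs_real_inner_le_norm _ _
      _ ≤ ‖v‖ * (‖Matrix.toEuclideanCLM (𝕜 := ℝ) (hessian (f i) x)‖ * ‖v‖) := by
          gcongr
          exact ContinuousLinearMap.le_opNorm _ _
      _ ≤ Lg := by rw [hv1]; simpa [specNorm] using hhess i
  have hQ : ∀ (s : Finset (Fin d)) (c : ℝ),
      ⟪v, Matrix.toEuclideanCLM (𝕜 := ℝ) (hessian (fun y => c * ∑ i ∈ s, f i y) x) v⟫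
        = c * ∑ i ∈ s, q i := by
    intro s c
    rw [hessian_combo f hf s c x, map_smul, map_sum, ContinuousLinearMap.smul_apply,
      real_inner_smul_right, ContinuousLinearMap.sum_apply, inner_sum]
  have hkdn : H.card ≤ d := by simpa using Finset.card_le_univ H
  set k : ℝ := (H.card : ℝ) with hk
  have hk0 : (0:ℝ) < k := by rw [hk]; exact_mod_cast Finset.card_pos.mpr hH
  have hkd : k ≤ (d:ℝ) := by rw [hk]; exact_mod_cast hkdn
  have hd0 : (0:ℝ) < d := lt_of_lt_of_le hk0 hkd
  have hk1h : (1 - h) * (d:ℝ) ≤ k :=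
    le_trans (Nat.le_ceil _) (by rw [hk]; exact_mod_cast hcard)
  have hSuniv : ∑ i, q i < -εH * d := by
    have h1 : (d:ℝ)⁻¹ * ∑ i, q i < -εH := by
      rw [← hQ Finset.univ (d:ℝ)⁻¹, hveq]
      linarith [hcurv]
    have h2 := mul_lt_mul_of_pos_left h1 hd0
    rw [← mul_assoc, mul_inv_cancel₀ (ne_of_gt hd0), one_mul] at h2
    linarith
  have hsplit : ∑ i ∈ Finset.univ \ H, q i + ∑ i ∈ H, q i = ∑ i, q i :=
    Finset.sum_sdiff (Finset.subset_univ H)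
  have habs : |∑ i ∈ Finset.univ \ H, q i| ≤ ((d:ℝ) - k) * Lg := by
    calc |∑ i ∈ Finset.univ \ H, q i| ≤ ∑ i ∈ Finset.univ \ H, |q i| :=
          Finset.abs_sum_le_sum_abs _ _
      _ ≤ (Finset.univ \ H).card • Lg :=
          Finset.sum_le_card_nsmul _ _ _ (fun i _ => hqbound i)
      _ = ((d:ℝ) - k) * Lg := by
          rw [Finset.card_sdiff_of_subset (Finset.subset_univ H), Finset.card_univ, Fintype.card_fin,
            nsmul_eq_mul, Nat.cast_sub hkdn, hk]
  have hdk : (d:ℝ) - k ≤ h * d := by nlinarith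
  have hmain : ∑ i ∈ H, q i < k * (-(4 * εH / 5)) := by
    nlinarith [mul_le_mul_of_nonneg_right hdk hLg.le,
      mul_le_mul_of_nonneg_right hsmall.le hd0.le,
      mul_le_mul_of_nonneg_left hkd hεH.le, abs_le.mp habs]
  have hfinal : lambdaMin (hessian (fun y => ((H.card : ℝ))⁻¹ * ∑ i ∈ H, f i y) x)
      < -(4 * εH / 5) := by
    have hle := lambdaMin_le_inner hermH v hv1
    rw [hQ H ((H.card : ℝ))⁻¹] at hle
    have h2 := mul_lt_mul_of_pos_left hmain (inv_pos.mpr hk0)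
    rw [← mul_assoc, inv_mul_cancel₀ (ne_of_gt hk0), one_mul] at h2
    exact lt_of_le_of_lt hle h2
  linarith
end

section
/- (First-order sufficient condition for a successful iteration.) Let f : ℝⁿ → ℝ be differentiable with L_g-Lipschitz continuous gradient, L_g > 0. Let α ∈ (0,1), D_0 ≥ 0, 0 < Δ ≤ Δ_max, x, g, u ∈ ℝⁿ, and let B be a symmetric n×n matrix. Assume: (i) ‖g − ∇f(x)‖ ≤ 2 L_g D_0 (Δ/Δ_max); (ii) ‖B‖ ≤ L_g (spectral norm); (iii) ‖u‖ ≤ Δ; (iv) with m(v) := f(x) + ⟨g, v⟩ + ½⟨B v, v⟩, the decrease m(0) − m(u) ≥ ½ ‖g‖ min{Δ, ‖g‖/L_g} holds; and (v) Δ ≤ (1−α)‖g‖ / (2 [1 + 2 D_0/Δ_max] L_g). Then f(x) − f(x+u) ≥ α (m(0) − m(u)); that is, the trust-region ratio ρ = (f(x) − f(x+u))/(m(0) − m(u)) satisfies ρ ≥ α. -/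
open scoped RealInnerProductSpace

lemma descent_lemma {n : ℕ} (f : EuclideanSpace ℝ (Fin n) → ℝ) (Lg : ℝ)
    (hdiff : Differentiable ℝ f)
    (hlip : ∀ y z : EuclideanSpace ℝ (Fin n), ‖gradient f y - gradient f z‖ ≤ Lg * ‖y - z‖)
    (x u : EuclideanSpace ℝ (Fin n)) :
    f (x + u) ≤ f x + ⟪gradient f x, u⟫ + Lg / 2 * ‖u‖ ^ 2 := by
  set φ : ℝ → ℝ := fun t => f (x + t • u) - t * ⟪gradient f x, u⟫ - t ^ 2 * (Lg / 2) * ‖u‖ ^ 2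
    with hφ
  have hline : ∀ t : ℝ, HasDerivAt (fun s : ℝ => x + s • u) u t := fun t => by
    simpa using ((hasDerivAt_id t).smul_const u).const_add x
  have hfd : ∀ t : ℝ, HasDerivAt (fun s => f (x + s • u)) ⟪gradient f (x + t • u), u⟫ t := by
    intro t
    have h1 := ((hdiff (x + t • u)).hasGradientAt.hasFDerivAt).comp_hasDerivAt t (hline t)
    simpa [InnerProductSpace.toDual_apply_apply, Function.comp_def] using h1
  have hφd : ∀ t : ℝ, HasDerivAt φ
      (⟪gradient f (x + t • u), u⟫ - ⟪gradient f x, u⟫ - t * Lg * ‖u‖ ^ 2) t := by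
    intro t
    have h2 : HasDerivAt φ _ t := (((hfd t).sub ((hasDerivAt_id t).mul_const (⟪gradient f x, u⟫ : ℝ))).sub
      (((hasDerivAt_pow 2 t).mul_const (Lg / 2)).mul_const (‖u‖ ^ 2)))
    convert h2 using 1
    push_cast [id]
    ring
  have hanti : AntitoneOn φ (Set.Icc (0:ℝ) 1) := by
    apply antitoneOn_of_deriv_nonpos (convex_Icc 0 1)
    · exact fun t _ => (hφd t).continuousAt.continuousWithinAt
    · exact fun t ht => ((hφd t).differentiableAt).differentiableWithinAt
    · intro t ht
      rw [interior_Icc] at ht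
      rw [(hφd t).deriv]
      have key : ⟪gradient f (x + t • u), u⟫ - ⟪gradient f x, u⟫ ≤ t * Lg * ‖u‖ ^ 2 := by
        rw [← inner_sub_left]
        calc ⟪gradient f (x + t • u) - gradient f x, u⟫
            ≤ ‖gradient f (x + t • u) - gradient f x‖ * ‖u‖ := real_inner_le_norm _ _
          _ ≤ (Lg * ‖x + t • u - x‖) * ‖u‖ :=
              mul_le_mul_of_nonneg_right (hlip _ _) (norm_nonneg u)
          _ = t * Lg * ‖u‖ ^ 2 := by
              rw [add_sub_cancel_left, norm_smul, Real.norm_eq_abs, abs_of_pos ht.1]; ring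
      linarith
  have h10 := hanti (Set.left_mem_Icc.2 zero_le_one) (Set.right_mem_Icc.2 zero_le_one) zero_le_one
  simp only [hφ, zero_smul, add_zero, one_smul, zero_mul, sub_zero, one_pow, one_mul,
    zero_pow, mul_zero] at h10
  linarith

lemma arith_lemma (α r Δ Lg ng fd md : ℝ) (hα0 : 0 < α) (hα1 : α < 1) (hr : 0 ≤ r)
    (hΔ : 0 < Δ) (hLg : 0 < Lg)
    (hkey : fd - md ≥ -(2 * r * Lg * Δ * Δ) - Lg * Δ ^ 2)
    (h4 : md ≥ 1 / 2 * ng * Δ)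
    (hg_lb : 2 * (1 + 2 * r) * Lg * Δ ≤ (1 - α) * ng) :
    fd ≥ α * md := by
  have hα' : 0 < 1 - α := by linarith
  have e1 : (1 + 2 * r) * Lg * Δ ^ 2 ≤ (1 - α) * md := by
    nlinarith [mul_le_mul_of_nonneg_left hg_lb (show (0:ℝ) ≤ Δ / 2 by positivity),
      mul_le_mul_of_nonneg_left h4 hα'.le]
  nlinarith

set_option maxHeartbeats 1000000 in
theorem stmt_7 {n : ℕ} (f : EuclideanSpace ℝ (Fin n) → ℝ)
    (Lg : ℝ) (hLg : 0 < Lg)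
    (hdiff : Differentiable ℝ f)
    (hlip : ∀ y z : EuclideanSpace ℝ (Fin n),
      ‖gradient f y - gradient f z‖ ≤ Lg * ‖y - z‖)
    (α D0 Δ Δmax : ℝ) (hα0 : 0 < α) (hα1 : α < 1) (hD0 : 0 ≤ D0)
    (hΔ : 0 < Δ) (hΔmax : Δ ≤ Δmax)
    (x g u : EuclideanSpace ℝ (Fin n))
    (B : Matrix (Fin n) (Fin n) ℝ) (hB : B.IsHermitian)
    (m : EuclideanSpace ℝ (Fin n) → ℝ)
    (hm : ∀ v, m v = f x + ⟪g, v⟫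
      + (1 / 2) * ⟪(Matrix.toEuclideanCLM (𝕜 := ℝ) B) v, v⟫)
    (h1 : ‖g - gradient f x‖ ≤ 2 * Lg * D0 * (Δ / Δmax))
    (h2 : specNorm B ≤ Lg)
    (h3 : ‖u‖ ≤ Δ)
    (h4 : m 0 - m u ≥ 1 / 2 * ‖g‖ * min Δ (‖g‖ / Lg))
    (h5 : Δ ≤ (1 - α) * ‖g‖ / (2 * (1 + 2 * (D0 / Δmax)) * Lg)) :
    f x - f (x + u) ≥ α * (m 0 - m u) := by
  have hΔmax0 : 0 < Δmax := lt_of_lt_of_le hΔ hΔmax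
  set r : ℝ := D0 / Δmax with hrdef
  have hr : 0 ≤ r := div_nonneg hD0 hΔmax0.le
  have hC : 0 < 2 * (1 + 2 * r) * Lg := by positivity
  have hg_lb : 2 * (1 + 2 * r) * Lg * Δ ≤ (1 - α) * ‖g‖ := by
    rw [le_div_iff₀ hC] at h5; linarith
  have hα' : 0 < 1 - α := by linarith
  have hgnn : (0:ℝ) ≤ ‖g‖ := norm_nonneg g
  have hmin : min Δ (‖g‖ / Lg) = Δ := by
    apply min_eq_left
    rw [le_div_iff₀ hLg]
    nlinarith [mul_nonneg hα0.le hgnn, mul_nonneg (mul_nonneg hr hLg.le) hΔ.le]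
  rw [hmin] at h4
  have hu0 : (0:ℝ) ≤ ‖u‖ := norm_nonneg u
  have hdesc := descent_lemma f Lg hdiff hlip x u
  -- quadratic form bound
  unfold specNorm at h2
  have hBu : |⟪(Matrix.toEuclideanCLM (𝕜 := ℝ) B) u, u⟫| ≤ Lg * ‖u‖ ^ 2 := by
    calc |⟪(Matrix.toEuclideanCLM (𝕜 := ℝ) B) u, u⟫|
        ≤ ‖(Matrix.toEuclideanCLM (𝕜 := ℝ) B) u‖ * ‖u‖ := abs_real_inner_le_norm _ _
      _ ≤ (‖Matrix.toEuclideanCLM (𝕜 := ℝ) B‖ * ‖u‖) * ‖u‖ :=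
          mul_le_mul_of_nonneg_right (ContinuousLinearMap.le_opNorm _ _) hu0
      _ ≤ (Lg * ‖u‖) * ‖u‖ :=
          mul_le_mul_of_nonneg_right (mul_le_mul_of_nonneg_right h2 hu0) hu0
      _ = Lg * ‖u‖ ^ 2 := by ring
  have hBu' : ⟪(Matrix.toEuclideanCLM (𝕜 := ℝ) B) u, u⟫ ≥ -(Lg * ‖u‖ ^ 2) :=
    neg_le_of_abs_le hBu
  have hm0 : m 0 = f x := by simp [hm]
  have hmu : m 0 - m u = -⟪g, u⟫ - (1/2) * ⟪(Matrix.toEuclideanCLM (𝕜 := ℝ) B) u, u⟫ := by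
    rw [hm0, hm u]; ring
  have hgG : ⟪g - gradient f x, u⟫ ≥ -(2 * r * Lg * Δ * Δ) := by
    have h6 : |⟪g - gradient f x, u⟫| ≤ ‖g - gradient f x‖ * ‖u‖ := abs_real_inner_le_norm _ _
    have h7 : ‖g - gradient f x‖ * ‖u‖ ≤ 2 * r * Lg * Δ * Δ := by
      have hge : (0:ℝ) ≤ ‖g - gradient f x‖ := norm_nonneg _
      have h1' : ‖g - gradient f x‖ ≤ 2 * r * Lg * Δ := by
        rw [hrdef]
        calc ‖g - gradient f x‖ ≤ 2 * Lg * D0 * (Δ / Δmax) := h1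
          _ = 2 * (D0 / Δmax) * Lg * Δ := by ring
      nlinarith
    have := neg_le_of_abs_le (h6.trans h7)
    linarith
  have hsplit : ⟪g, u⟫ = ⟪g - gradient f x, u⟫ + ⟪gradient f x, u⟫ := by
    rw [inner_sub_left]; ring
  have hLu : Lg * ‖u‖ ^ 2 ≤ Lg * Δ ^ 2 := by
    nlinarith [mul_le_mul_of_nonneg_left (mul_self_le_mul_self hu0 h3) hLg.le]
  have hkey : (f x - f (x + u)) - (m 0 - m u) ≥ -(2 * r * Lg * Δ * Δ) - Lg * Δ ^ 2 := by
    rw [hmu, hsplit]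
    linarith
  exact arith_lemma α r Δ Lg ‖g‖ (f x - f (x + u)) (m 0 - m u) hα0 hα1 hr hΔ hLg hkey h4 hg_lb
end

section
/- (Second-order sufficient condition for a successful iteration.) Let f : ℝⁿ → ℝ be twice continuously differentiable with L_g-Lipschitz gradient and L_H-Lipschitz Hessian (L_g, L_H > 0). Let α ∈ (0,1), ε_g, ε_H > 0, D_0 ≥ 0, 0 < Δ ≤ Δ_max, x, g, u ∈ ℝⁿ, and let B be a symmetric n×n matrix. Assume: (i) ‖g − ∇f(x)‖ ≤ 2 L_g D_0 (Δ/Δ_max)²; (ii) ‖B‖ ≤ L_g; (iii) ‖u‖ ≤ Δ; (iv) with m(v) := f(x) + ⟨g, v⟩ + ½⟨B v, v⟩, one has m(0) − m(u) ≥ max{ ½‖g‖ min{Δ, ‖g‖/L_g}, −λ_min(B) Δ² }; (v) either ‖g‖ > 4ε_g/5, or both −λ_min(B) > 4ε_H/5 and ‖B − ∇²f(x)‖ ≤ 2 L_g (Δ/Δ_max); and (vi) Δ ≤ min{ 2(1−α)ε_g / (5 [1 + 2 D_0/Δ_max] L_g), 4(1−α)ε_H / (5 [L_H/6 + 2(D_0/Δ_max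 + 1)(L_g/Δ_max)] ) }. Then f(x) − f(x+u) ≥ α (m(0) − m(u)); that is, the trust-region ratio ρ = (f(x) − f(x+u))/(m(0) − m(u)) satisfies ρ ≥ α. -/
open scoped RealInnerProductSpace

/- ---------- auxiliary lemmas ---------- -/

lemma aux_fderiv_inner {n : ℕ} (f : EuclideanSpace ℝ (Fin n) → ℝ)
    (x v : EuclideanSpace ℝ (Fin n)) :
    fderiv ℝ f x v = ⟪gradient f x, v⟫ := by
  simp [gradient, InnerProductSpace.toDual_symm_apply]

lemma aux_decomp {n : ℕ} (v : EuclideanSpace ℝ (Fin n)) :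
    v = ∑ i, v i • EuclideanSpace.single i (1:ℝ) := by
  have := (EuclideanSpace.basisFun (Fin n) ℝ).sum_repr v
  simpa [EuclideanSpace.basisFun_apply, EuclideanSpace.basisFun_repr] using this.symm

lemma aux_clm_inner {n : ℕ} (A : Matrix (Fin n) (Fin n) ℝ) (v w : EuclideanSpace ℝ (Fin n)) :
    ⟪(Matrix.toEuclideanCLM (𝕜 := ℝ) A) v, w⟫ = ∑ i, ∑ j, A i j * v j * w i := by
  have h : ∀ i, ((Matrix.toEuclideanCLM (𝕜 := ℝ) A) v) i = ∑ j, A i j * v j := by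
    intro i; rfl
  simp [PiLp.inner_apply, h, Finset.sum_mul]
  simp only [Finset.mul_sum]
  exact Finset.sum_congr rfl fun i _ => Finset.sum_congr rfl fun j _ => by ring

lemma aux_hessian_inner {n : ℕ} (f : EuclideanSpace ℝ (Fin n) → ℝ)
    (y v : EuclideanSpace ℝ (Fin n)) :
    ⟪(Matrix.toEuclideanCLM (𝕜 := ℝ) (hessian f y)) v, v⟫
      = fderiv ℝ (fderiv ℝ f) y v v := by
  rw [aux_clm_inner]
  have hij : ∀ i j, hessian f y i j
      = fderiv ℝ (fderiv ℝ f) y (EuclideanSpace.single i (1:ℝ)) (EuclideanSpace.single j 1) := by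
    intro i j
    rw [hessian, iteratedFDeriv_two_apply]
    simp
  have hv := aux_decomp v
  conv_rhs => rw [hv]
  rw [eq_comm]
  simp only [map_sum, map_smul, ContinuousLinearMap.sum_apply, ContinuousLinearMap.smul_apply,
    ContinuousLinearMap.coe_sum', ContinuousLinearMap.coe_smul', Finset.sum_apply, Pi.smul_apply,
    smul_eq_mul, hij]
  rw [Finset.sum_comm]
  exact Finset.sum_congr rfl fun i _ => by
    rw [Finset.mul_sum]
    exact Finset.sum_congr rfl fun j _ => by ring

lemma aux_inner_le_spec {n : ℕ} (A : Matrix (Fin n) (Fin n) ℝ) (v : EuclideanSpace ℝ (Fin n)) :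
    ⟪(Matrix.toEuclideanCLM (𝕜 := ℝ) A) v, v⟫ ≤ specNorm A * ‖v‖ ^ 2 := by
  calc ⟪(Matrix.toEuclideanCLM (𝕜 := ℝ) A) v, v⟫
      ≤ ‖(Matrix.toEuclideanCLM (𝕜 := ℝ) A) v‖ * ‖v‖ := real_inner_le_norm _ _
    _ ≤ (‖Matrix.toEuclideanCLM (𝕜 := ℝ) A‖ * ‖v‖) * ‖v‖ := by
        gcongr
        exact (Matrix.toEuclideanCLM (𝕜 := ℝ) A).le_opNorm v
    _ = specNorm A * ‖v‖ ^ 2 := by rw [specNorm]; ring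

lemma aux_spec_neg {n : ℕ} (A : Matrix (Fin n) (Fin n) ℝ) : specNorm (-A) = specNorm A := by
  rw [specNorm, specNorm, map_neg, norm_neg]

lemma aux_spec_ge {n : ℕ} (A : Matrix (Fin n) (Fin n) ℝ) (v : EuclideanSpace ℝ (Fin n)) :
    -(specNorm A * ‖v‖ ^ 2) ≤ ⟪(Matrix.toEuclideanCLM (𝕜 := ℝ) A) v, v⟫ := by
  have := aux_inner_le_spec (-A) v
  rw [aux_spec_neg, map_neg] at this
  simp only [ContinuousLinearMap.neg_apply, inner_neg_left] at this
  linarith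

section taylor
variable {n : ℕ} (f : EuclideanSpace ℝ (Fin n) → ℝ) (x u : EuclideanSpace ℝ (Fin n))

lemma aux_line (t : ℝ) : HasDerivAt (fun s : ℝ => x + s • u) u t := by
  simpa using ((hasDerivAt_id t).smul_const u).const_add x

lemma taylor1 (Lg : ℝ) (hf : ContDiff ℝ 2 f)
    (hlipg : ∀ y z : EuclideanSpace ℝ (Fin n),
      ‖gradient f y - gradient f z‖ ≤ Lg * ‖y - z‖) :
    f (x + u) ≤ f x + ⟪gradient f x, u⟫ + Lg / 2 * ‖u‖ ^ 2 := by
  set ψ : ℝ → ℝ := fun t => fderiv ℝ f (x + t • u) u with hψdef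
  have hdiff : Differentiable ℝ f := hf.differentiable (by norm_num)
  have hφ : ∀ t : ℝ, HasDerivAt (fun s => f (x + s • u)) (ψ t) t := fun t =>
    (hdiff (x + t • u)).hasFDerivAt.comp_hasDerivAt t (aux_line x u t)
  have hline_cont : Continuous (fun t : ℝ => x + t • u) := by continuity
  have hψcont : Continuous ψ := by
    have h2 : Continuous (fderiv ℝ f) := hf.continuous_fderiv (by norm_num)
    exact (h2.comp hline_cont).clm_apply continuous_const
  have hFTC : ∫ t in (0:ℝ)..1, ψ t = f (x + u) - f x := by
    have := intervalIntegral.integral_eq_sub_of_hasDerivAt (f := fun s => f (x + s • u))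
      (fun t _ => hφ t) (hψcont.intervalIntegrable 0 1)
    simpa using this
  have hbound : ∀ t ∈ Set.Icc (0:ℝ) 1, ψ t ≤ ψ 0 + Lg * ‖u‖ ^ 2 * t := by
    intro t ht
    have h0 : ψ 0 = ⟪gradient f x, u⟫ := by
      simp only [hψdef, zero_smul, add_zero]; exact aux_fderiv_inner f x u
    have hts : ψ t = ⟪gradient f (x + t • u), u⟫ := by
      simpa [hψdef] using aux_fderiv_inner f (x + t • u) u
    have hsub : ψ t - ψ 0 = ⟪gradient f (x + t • u) - gradient f x, u⟫ := by
      rw [h0, hts, inner_sub_left]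
    have h1 : ⟪gradient f (x + t • u) - gradient f x, u⟫
        ≤ ‖gradient f (x + t • u) - gradient f x‖ * ‖u‖ := real_inner_le_norm _ _
    have h2 : ‖gradient f (x + t • u) - gradient f x‖ ≤ Lg * (t * ‖u‖) := by
      have := hlipg (x + t • u) x
      simpa [norm_smul, Real.norm_eq_abs, abs_of_nonneg ht.1] using this
    nlinarith [norm_nonneg u, norm_nonneg (gradient f (x + t • u) - gradient f x), ht.1]
  have hint : ∫ t in (0:ℝ)..1, ψ t ≤ ∫ t in (0:ℝ)..1, (ψ 0 + Lg * ‖u‖ ^ 2 * t) :=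
    intervalIntegral.integral_mono_on (by norm_num) (hψcont.intervalIntegrable 0 1)
      ((continuous_const.add (continuous_const.mul continuous_id)).intervalIntegrable 0 1) hbound
  have hval : ∫ t in (0:ℝ)..1, (ψ 0 + Lg * ‖u‖ ^ 2 * t) = ψ 0 + Lg / 2 * ‖u‖ ^ 2 := by
    rw [intervalIntegral.integral_add (g := fun t => Lg * ‖u‖ ^ 2 * t) intervalIntegrable_const
      ((continuous_const.mul continuous_id').intervalIntegrable 0 1),
      intervalIntegral.integral_const_mul, integral_id]
    simp; ring
  have h0 : ψ 0 = ⟪gradient f x, u⟫ := by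
      simp only [hψdef, zero_smul, add_zero]; exact aux_fderiv_inner f x u
  rw [hval, h0] at hint
  linarith [hFTC ▸ hint]

lemma taylor2 (LH : ℝ) (hf : ContDiff ℝ 2 f)
    (hlipH : ∀ y z : EuclideanSpace ℝ (Fin n),
      specNorm (hessian f y - hessian f z) ≤ LH * ‖y - z‖) :
    f (x + u) ≤ f x + ⟪gradient f x, u⟫
      + 1 / 2 * ⟪(Matrix.toEuclideanCLM (𝕜 := ℝ) (hessian f x)) u, u⟫
      + LH / 6 * ‖u‖ ^ 3 := by
  set ψ : ℝ → ℝ := fun t => fderiv ℝ f (x + t • u) u with hψdef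
  set χ : ℝ → ℝ := fun t => fderiv ℝ (fderiv ℝ f) (x + t • u) u u with hχdef
  have hdiff : Differentiable ℝ f := hf.differentiable (by norm_num)
  have hφ : ∀ t : ℝ, HasDerivAt (fun s => f (x + s • u)) (ψ t) t := fun t =>
    (hdiff (x + t • u)).hasFDerivAt.comp_hasDerivAt t (aux_line x u t)
  have hF : Differentiable ℝ (fderiv ℝ f) :=
    (hf.fderiv_right (m := 1) (by norm_num)).differentiable (by norm_num)
  have hψ' : ∀ t : ℝ, HasDerivAt ψ (χ t) t := by
    intro t
    have step1 : HasDerivAt (fun s : ℝ => fderiv ℝ f (x + s • u))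
        (fderiv ℝ (fderiv ℝ f) (x + t • u) u) t :=
      (hF (x + t • u)).hasFDerivAt.comp_hasDerivAt t (aux_line x u t)
    simpa using step1.clm_apply (hasDerivAt_const t u)
  have hline_cont : Continuous (fun t : ℝ => x + t • u) := by continuity
  have hχcont : Continuous χ := by
    have h2 : Continuous (fderiv ℝ (fderiv ℝ f)) :=
      (hf.fderiv_right (m := 1) (by norm_num)).continuous_fderiv (by norm_num)
    exact (((h2.comp hline_cont).clm_apply continuous_const).clm_apply continuous_const)
  have hG : ∀ t : ℝ, HasDerivAt (fun s => f (x + s • u) + (1 - s) * ψ s) ((1 - t) * χ t) t := by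
    intro t
    have h1 : HasDerivAt (fun s : ℝ => (1 - s)) (-1) t := by
      simpa using (hasDerivAt_id t).const_sub (1:ℝ)
    have := (hφ t).add (h1.mul (hψ' t))
    exact this.congr_deriv (by ring)
  have hintg : IntervalIntegrable (fun t => (1 - t) * χ t) MeasureTheory.volume 0 1 :=
    ((continuous_const.sub continuous_id).mul hχcont).intervalIntegrable 0 1
  have hFTC : ∫ t in (0:ℝ)..1, (1 - t) * χ t = f (x + u) - (f x + ψ 0) := by
    have := intervalIntegral.integral_eq_sub_of_hasDerivAt (fun t _ => hG t) hintg
    simpa [hψdef] using this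
  have hχbound : ∀ t ∈ Set.Icc (0:ℝ) 1,
      (1 - t) * χ t ≤ (1 - t) * (χ 0 + LH * ‖u‖ ^ 3 * t) := by
    intro t ht
    have hts : χ t = ⟪(Matrix.toEuclideanCLM (𝕜 := ℝ) (hessian f (x + t • u))) u, u⟫ :=
      (aux_hessian_inner f (x + t • u) u).symm
    have h0 : χ 0 = ⟪(Matrix.toEuclideanCLM (𝕜 := ℝ) (hessian f x)) u, u⟫ := by
      have := (aux_hessian_inner f x u).symm
      simpa [hχdef] using this
    have hsub : χ t - χ 0
        = ⟪(Matrix.toEuclideanCLM (𝕜 := ℝ) (hessian f (x + t • u) - hessian f x)) u, u⟫ := by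
      rw [hts, h0, map_sub, ContinuousLinearMap.sub_apply, inner_sub_left]
    have h1 : χ t - χ 0 ≤ specNorm (hessian f (x + t • u) - hessian f x) * ‖u‖ ^ 2 := by
      rw [hsub]; exact aux_inner_le_spec _ _
    have h2 : specNorm (hessian f (x + t • u) - hessian f x) ≤ LH * (t * ‖u‖) := by
      have := hlipH (x + t • u) x
      simpa [norm_smul, Real.norm_eq_abs, abs_of_nonneg ht.1] using this
    have h3 : χ t ≤ χ 0 + LH * ‖u‖ ^ 3 * t := by
      nlinarith [norm_nonneg u, ht.1, sq_nonneg (‖u‖)]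
    have h4 : (0:ℝ) ≤ 1 - t := by linarith [ht.2]
    exact mul_le_mul_of_nonneg_left h3 h4
  have hint : ∫ t in (0:ℝ)..1, (1 - t) * χ t
      ≤ ∫ t in (0:ℝ)..1, (1 - t) * (χ 0 + LH * ‖u‖ ^ 3 * t) := by
    refine intervalIntegral.integral_mono_on (by norm_num) hintg ?_ hχbound
    exact ((continuous_const.sub continuous_id).mul
      (continuous_const.add (continuous_const.mul continuous_id))).intervalIntegrable 0 1
  have hval : ∫ t in (0:ℝ)..1, (1 - t) * (χ 0 + LH * ‖u‖ ^ 3 * t)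
      = 1 / 2 * χ 0 + LH / 6 * ‖u‖ ^ 3 := by
    have hrw : ∀ t : ℝ, (1 - t) * (χ 0 + LH * ‖u‖ ^ 3 * t)
        = χ 0 + (LH * ‖u‖ ^ 3 - χ 0) * t - LH * ‖u‖ ^ 3 * t ^ 2 := by
      intro t; ring
    simp_rw [hrw]
    rw [intervalIntegral.integral_sub (f := fun t : ℝ => χ 0 + (LH * ‖u‖ ^ 3 - χ 0) * t)
        (g := fun t : ℝ => LH * ‖u‖ ^ 3 * t ^ 2)
        ((continuous_const.add (continuous_const.mul continuous_id')).intervalIntegrable 0 1)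
        ((continuous_const.mul (continuous_pow 2)).intervalIntegrable 0 1),
      intervalIntegral.integral_add (g := fun t : ℝ => (LH * ‖u‖ ^ 3 - χ 0) * t)
        intervalIntegrable_const ((continuous_const.mul continuous_id').intervalIntegrable 0 1),
      intervalIntegral.integral_const_mul, intervalIntegral.integral_const_mul,
      integral_id, integral_pow]
    simp; ring
  have hψ0 : ψ 0 = ⟪gradient f x, u⟫ := by
      simp only [hψdef, zero_smul, add_zero]; exact aux_fderiv_inner f x u
  have hχ0 : χ 0 = ⟪(Matrix.toEuclideanCLM (𝕜 := ℝ) (hessian f x)) u, u⟫ := by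
    have := (aux_hessian_inner f x u).symm
    simpa [hχdef] using this
  rw [hval] at hint
  rw [hFTC] at hint
  rw [hψ0, hχ0] at hint
  linarith

end taylor

set_option maxHeartbeats 1000000 in
theorem stmt_13 {n : ℕ} (f : EuclideanSpace ℝ (Fin n) → ℝ)
    (Lg LH : ℝ) (hLg : 0 < Lg) (hLH : 0 < LH)
    (hf : ContDiff ℝ 2 f)
    (hlipg : ∀ y z : EuclideanSpace ℝ (Fin n),
      ‖gradient f y - gradient f z‖ ≤ Lg * ‖y - z‖)
    (hlipH : ∀ y z : EuclideanSpace ℝ (Fin n),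
      specNorm (hessian f y - hessian f z) ≤ LH * ‖y - z‖)
    (α εg εH D0 Δ Δmax : ℝ) (hα0 : 0 < α) (hα1 : α < 1)
    (hεg : 0 < εg) (hεH : 0 < εH) (hD0 : 0 ≤ D0)
    (hΔ : 0 < Δ) (hΔmax : Δ ≤ Δmax)
    (x g u : EuclideanSpace ℝ (Fin n))
    (B : Matrix (Fin n) (Fin n) ℝ) (hB : B.IsHermitian)
    (m : EuclideanSpace ℝ (Fin n) → ℝ)
    (hm : ∀ v, m v = f x + ⟪g, v⟫
      + (1 / 2) * ⟪(Matrix.toEuclideanCLM (𝕜 := ℝ) B) v, v⟫)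
    (h1 : ‖g - gradient f x‖ ≤ 2 * Lg * D0 * (Δ / Δmax) ^ 2)
    (h2 : specNorm B ≤ Lg)
    (h3 : ‖u‖ ≤ Δ)
    (h4 : m 0 - m u ≥ max (1 / 2 * ‖g‖ * min Δ (‖g‖ / Lg)) (-lambdaMin B * Δ ^ 2))
    (h5 : 4 * εg / 5 < ‖g‖ ∨
      (4 * εH / 5 < -lambdaMin B ∧ specNorm (B - hessian f x) ≤ 2 * Lg * (Δ / Δmax)))
    (h6 : Δ ≤ min (2 * (1 - α) * εg / (5 * (1 + 2 * (D0 / Δmax)) * Lg))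
      (4 * (1 - α) * εH / (5 * (LH / 6 + 2 * (D0 / Δmax + 1) * (Lg / Δmax))))) :
    f x - f (x + u) ≥ α * (m 0 - m u) := by
  have hΔm0 : 0 < Δmax := lt_of_lt_of_le hΔ hΔmax
  have m0 : m 0 = f x := by simp [hm]
  suffices hkey : f (x + u) - m u ≤ (1 - α) * (m 0 - m u) by
    have hh : f x - f (x + u) = (m 0 - m u) - (f (x + u) - m u) := by rw [m0]; ring
    linarith [hkey]
  have hu0 : 0 ≤ ‖u‖ := norm_nonneg u
  have hu2 : ‖u‖ ^ 2 ≤ Δ ^ 2 := by nlinarith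
  have hinner1 : ⟪gradient f x, u⟫ - ⟪g, u⟫ ≤ 2 * Lg * D0 * (Δ / Δmax) ^ 2 * Δ := by
    have hle : ⟪gradient f x - g, u⟫ ≤ ‖gradient f x - g‖ * ‖u‖ := real_inner_le_norm _ _
    rw [inner_sub_left] at hle
    have hrev : ‖gradient f x - g‖ = ‖g - gradient f x‖ := norm_sub_rev _ _
    rw [hrev] at hle
    nlinarith [norm_nonneg (g - gradient f x)]
  rcases h5 with hg | ⟨hH, hBH⟩
  · -- gradient case
    set Cg : ℝ := 1 + 2 * (D0 / Δmax) with hCgdef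
    clear_value Cg
    have hCg1 : 1 ≤ Cg := by
      have : (0:ℝ) ≤ D0 / Δmax := div_nonneg hD0 hΔm0.le
      simp only [hCgdef]; linarith
    have hden : (0:ℝ) < 5 * Cg * Lg := by
      have hCg0 : (0:ℝ) < Cg := by linarith
      have := mul_pos (mul_pos (by norm_num : (0:ℝ) < 5) hCg0) hLg
      linarith
    have h6a : Δ ≤ 2 * (1 - α) * εg / (5 * Cg * Lg) := le_trans h6 (min_le_left _ _)
    have h6a' : Δ * (5 * Cg * Lg) ≤ 2 * (1 - α) * εg := (le_div_iff₀ hden).mp h6a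
    have hΔg : Δ ≤ ‖g‖ / Lg := by
      rw [le_div_iff₀ hLg]
      have e1 : Δ * 5 * Lg * 1 ≤ Δ * 5 * Lg * Cg :=
        mul_le_mul_of_nonneg_left hCg1 (by positivity)
      linarith [e1, h6a', hg, hεg, hα0, mul_pos hεg hα0]
    have hdec : 1 / 2 * ‖g‖ * Δ ≤ m 0 - m u := by
      have := le_trans (le_max_left (1 / 2 * ‖g‖ * min Δ (‖g‖ / Lg)) (-lambdaMin B * Δ ^ 2)) h4
      rwa [min_eq_left hΔg] at this
    have htay := taylor1 f x u Lg hf hlipg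
    have hBu : -(Lg * Δ ^ 2) ≤ ⟪(Matrix.toEuclideanCLM (𝕜 := ℝ) B) u, u⟫ := by
      have hlow := aux_spec_ge B u
      have hspec0 : (0:ℝ) ≤ specNorm B := by rw [specNorm]; exact norm_nonneg _
      have hstep : specNorm B * ‖u‖ ^ 2 ≤ Lg * Δ ^ 2 :=
        mul_le_mul h2 hu2 (sq_nonneg _) hLg.le
      linarith
    have hupper : f (x + u) - m u ≤ Lg * Cg * Δ ^ 2 := by
      rw [hm u]
      have hr1 : (0:ℝ) ≤ Δ / Δmax := div_nonneg hΔ.le hΔm0.le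
      have hr2 : Δ / Δmax ≤ 1 := div_le_one_of_le₀ hΔmax hΔm0.le
      have hDr : 2 * Lg * D0 * (Δ / Δmax) * Δ = 2 * Lg * (D0 / Δmax) * Δ ^ 2 := by
        field_simp
      have hrr : (Δ / Δmax) ^ 2 ≤ Δ / Δmax := by
        rw [sq]; exact mul_le_of_le_one_left hr1 hr2
      have hs1 : 2 * Lg * D0 * (Δ / Δmax) ^ 2 * Δ ≤ 2 * Lg * (D0 / Δmax) * Δ ^ 2 := by
        rw [← hDr]
        gcongr
      have hq : Lg / 2 * ‖u‖ ^ 2 ≤ Lg / 2 * Δ ^ 2 :=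
        mul_le_mul_of_nonneg_left hu2 (by linarith)
      have hCgx : Lg * Cg * Δ ^ 2
          = Lg * Δ ^ 2 + 2 * Lg * (D0 / Δmax) * Δ ^ 2 := by rw [hCgdef]; ring
      linarith [htay, hinner1, hs1, hq]
    have hA : Lg * Cg * Δ ^ 2 ≤ 2 * (1 - α) * εg / 5 * Δ := by
      have hmm := mul_le_mul_of_nonneg_right h6a' hΔ.le
      calc Lg * Cg * Δ ^ 2 = Δ * (5 * Cg * Lg) * Δ / 5 := by ring
        _ ≤ 2 * (1 - α) * εg * Δ / 5 := by linarith
        _ = 2 * (1 - α) * εg / 5 * Δ := by ring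
    have hB2 : 2 * (1 - α) * εg / 5 * Δ ≤ (1 - α) * (1 / 2 * ‖g‖ * Δ) := by
      have hp := mul_nonneg (mul_nonneg (sub_nonneg.mpr hα1.le) hΔ.le)
        (sub_nonneg.mpr hg.le)
      linarith [hp]
    have hC2 : (1 - α) * (1 / 2 * ‖g‖ * Δ) ≤ (1 - α) * (m 0 - m u) :=
      mul_le_mul_of_nonneg_left hdec (by linarith)
    linarith
  · -- eigenvalue case
    set C : ℝ := LH / 6 + 2 * (D0 / Δmax + 1) * (Lg / Δmax) with hCdef
    clear_value C
    have hCpos : (0:ℝ) < C := by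
      have h0 : (0:ℝ) ≤ D0 / Δmax := div_nonneg hD0 hΔm0.le
      have h1' : (0:ℝ) < Lg / Δmax := div_pos hLg hΔm0
      have h2' : (0:ℝ) < LH / 6 := by linarith
      have := mul_pos (mul_pos (by norm_num : (0:ℝ) < 2) (by linarith : (0:ℝ) < D0 / Δmax + 1)) h1'
      linarith
    have h6b : Δ ≤ 4 * (1 - α) * εH / (5 * C) := le_trans h6 (min_le_right _ _)
    have h6b' : Δ * (5 * C) ≤ 4 * (1 - α) * εH := (le_div_iff₀ (by linarith)).mp h6b
    have hdec : 4 * εH / 5 * Δ ^ 2 ≤ m 0 - m u := by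
      have hmax := le_trans (le_max_right (1 / 2 * ‖g‖ * min Δ (‖g‖ / Lg))
        (-lambdaMin B * Δ ^ 2)) h4
      have := mul_le_mul_of_nonneg_right hH.le (sq_nonneg Δ)
      linarith
    have htay := taylor2 f x u LH hf hlipH
    have hHB : ⟪(Matrix.toEuclideanCLM (𝕜 := ℝ) (hessian f x)) u, u⟫
        - ⟪(Matrix.toEuclideanCLM (𝕜 := ℝ) B) u, u⟫ ≤ 2 * Lg * (Δ / Δmax) * Δ ^ 2 := by
      have hsub : ⟪(Matrix.toEuclideanCLM (𝕜 := ℝ) (hessian f x)) u, u⟫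
          - ⟪(Matrix.toEuclideanCLM (𝕜 := ℝ) B) u, u⟫
          = ⟪(Matrix.toEuclideanCLM (𝕜 := ℝ) (hessian f x - B)) u, u⟫ := by
        rw [map_sub, ContinuousLinearMap.sub_apply, inner_sub_left]
      have hle := aux_inner_le_spec (hessian f x - B) u
      have heq : specNorm (hessian f x - B) = specNorm (B - hessian f x) := by
        rw [← aux_spec_neg (B - hessian f x), neg_sub]
      rw [hsub]
      have hbd : specNorm (hessian f x - B) ≤ 2 * Lg * (Δ / Δmax) := by rw [heq]; exact hBH
      have hr1 : (0:ℝ) ≤ Δ / Δmax := div_nonneg hΔ.le hΔm0.le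
      have hspec0 : (0:ℝ) ≤ specNorm (hessian f x - B) := by
        rw [specNorm]; exact norm_nonneg _
      have hstep : specNorm (hessian f x - B) * ‖u‖ ^ 2 ≤ 2 * Lg * (Δ / Δmax) * Δ ^ 2 :=
        mul_le_mul hbd hu2 (sq_nonneg _) (by positivity)
      linarith
    have hu3 : ‖u‖ ^ 3 ≤ Δ ^ 3 := by
      exact pow_le_pow_left₀ hu0 h3 3
    have hupper : f (x + u) - m u ≤ C * Δ ^ 3 := by
      rw [hm u]
      have hkey : 2 * Lg * D0 * (Δ / Δmax) ^ 2 * Δ + 1 / 2 * (2 * Lg * (Δ / Δmax) * Δ ^ 2)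
          + LH / 6 * Δ ^ 3 ≤ C * Δ ^ 3 := by
        have hrw : C * Δ ^ 3 - (2 * Lg * D0 * (Δ / Δmax) ^ 2 * Δ
            + 1 / 2 * (2 * Lg * (Δ / Δmax) * Δ ^ 2) + LH / 6 * Δ ^ 3)
            = (Lg / Δmax) * Δ ^ 3 := by
          rw [hCdef]
          field_simp
          ring
        have e1 : (0:ℝ) < (Lg / Δmax) * Δ ^ 3 := by positivity
        linarith
      have hcu : LH / 6 * ‖u‖ ^ 3 ≤ LH / 6 * Δ ^ 3 :=
        mul_le_mul_of_nonneg_left hu3 (by linarith)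
      linarith [htay, hinner1, hHB, hkey, hcu]
    have hA : C * Δ ^ 3 ≤ 4 * (1 - α) * εH / 5 * Δ ^ 2 := by
      have hmm := mul_le_mul_of_nonneg_right h6b' (sq_nonneg Δ)
      calc C * Δ ^ 3 = Δ * (5 * C) * Δ ^ 2 / 5 := by ring
        _ ≤ 4 * (1 - α) * εH * Δ ^ 2 / 5 := by linarith
        _ = 4 * (1 - α) * εH / 5 * Δ ^ 2 := by ring
    have hB2 : 4 * (1 - α) * εH / 5 * Δ ^ 2 = (1 - α) * (4 * εH / 5 * Δ ^ 2) := by ring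
    have hC2 : (1 - α) * (4 * εH / 5 * Δ ^ 2) ≤ (1 - α) * (m 0 - m u) :=
      mul_le_mul_of_nonneg_left hdec (by linarith)
    linarith
end
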